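/- arXiv:2005.01154 — 7 statements merged into one kernel-verified Lean document; each statement's English description precedes it below -/
import Mathlib

section
/- Let D(z) be a Hasse–Schmidt derivation on the exterior algebra ⋀V (i.e. D(z)(u∧v) = D(z)u ∧ D(z)v) whose constant term D_0 is the identity, and let D̄(z) be its inverse formal power series in End(⋀V)[[z]]. Then the integration by parts formula holds: D(z)(D̄(z)u ∧ v) = u ∧ D(z)v for all u, v ∈ ⋀V. -/
noncomputable section
open Finset

variable {W : Type} [AddCommGroup W] [Module ℚ W]

/-- apply a formal power series of endomorphisms of `⋀W` to a single element,
obtaining a formal power series `D(z)u` with coefficients in `⋀W`. -/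
def applyPS (D : PowerSeries (Module.End ℚ (ExteriorAlgebra ℚ W)))
    (u : ExteriorAlgebra ℚ W) : PowerSeries (ExteriorAlgebra ℚ W) :=
  PowerSeries.mk fun n => (PowerSeries.coeff n D) u

/-- the `z`-linear extension of `D(z)` to power series with coefficients in `⋀W`
(Cauchy product of the coefficients). -/
def actPS (D : PowerSeries (Module.End ℚ (ExteriorAlgebra ℚ W)))
    (f : PowerSeries (ExteriorAlgebra ℚ W)) : PowerSeries (ExteriorAlgebra ℚ W) :=
  PowerSeries.mk fun n =>
    ∑ p ∈ Finset.HasAntidiagonal.antidiagonal n, (PowerSeries.coeff p.1 D) ((PowerSeries.coeff p.2 f))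

/-- integration by parts: if `D(z)` is a Hasse–Schmidt derivation on `⋀W`
with `D₀ = id` and inverse power series `D̄(z)`, then
`D(z)(D̄(z)u ∧ v) = u ∧ D(z)v` for all `u, v ∈ ⋀W`. -/
theorem integration_by_parts
    (D Dbar : PowerSeries (Module.End ℚ (ExteriorAlgebra ℚ W)))
    (hHS : ∀ u v : ExteriorAlgebra ℚ W, applyPS D (u * v) = applyPS D u * applyPS D v)
    (h0 : PowerSeries.constantCoeff D = 1)
    (hinv₁ : D * Dbar = 1) (hinv₂ : Dbar * D = 1) (u v : ExteriorAlgebra ℚ W) :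
    actPS D (applyPS Dbar u * PowerSeries.C v)
      = PowerSeries.C u * applyPS D v := by
  have hHS' : ∀ (m : ℕ) (x y : ExteriorAlgebra ℚ W),
      (PowerSeries.coeff m D) (x * y)
        = ∑ q ∈ antidiagonal m,
            (PowerSeries.coeff q.1 D) x * (PowerSeries.coeff q.2 D) y := by
    intro m x y
    have h := congrArg (PowerSeries.coeff m) (hHS x y)
    simpa [applyPS, PowerSeries.coeff_mul] using h
  ext n
  have step1 : ∀ p : ℕ × ℕ,
      (PowerSeries.coeff p.2 (applyPS Dbar u * PowerSeries.C v))
        = (PowerSeries.coeff p.2 Dbar) u * v := by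
    intro p
    rw [PowerSeries.coeff_mul_C, applyPS, PowerSeries.coeff_mk]
  rw [actPS, PowerSeries.coeff_mk, PowerSeries.coeff_C_mul]
  simp only [step1, hHS']
  -- reindex the triple sum
  have hre : (∑ p ∈ antidiagonal n, ∑ q ∈ antidiagonal p.1,
        (PowerSeries.coeff q.1 D) ((PowerSeries.coeff p.2 Dbar) u)
          * (PowerSeries.coeff q.2 D) v)
      = ∑ p ∈ antidiagonal n, ∑ q ∈ antidiagonal p.1,
        (PowerSeries.coeff q.1 D) ((PowerSeries.coeff q.2 Dbar) u)
          * (PowerSeries.coeff p.2 D) v := by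
    rw [Finset.sum_sigma', Finset.sum_sigma']
    refine Finset.sum_nbij' (fun x ↦ ⟨(x.2.1 + x.1.2, x.2.2), (x.2.1, x.1.2)⟩)
      (fun x ↦ ⟨(x.2.1 + x.1.2, x.2.2), (x.2.1, x.1.2)⟩) ?_ ?_ ?_ ?_ ?_
    · rintro ⟨⟨p1, p2⟩, ⟨q1, q2⟩⟩ hx
      simp only [Finset.mem_sigma, Finset.HasAntidiagonal.mem_antidiagonal, and_true, true_and] at hx ⊢
      omega
    · rintro ⟨⟨p1, p2⟩, ⟨q1, q2⟩⟩ hx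
      simp only [Finset.mem_sigma, Finset.HasAntidiagonal.mem_antidiagonal, and_true, true_and] at hx ⊢
      omega
    · rintro ⟨⟨p1, p2⟩, ⟨q1, q2⟩⟩ hx
      simp only [Finset.mem_sigma, Finset.HasAntidiagonal.mem_antidiagonal] at hx
      simp only [Sigma.mk.inj_iff, Prod.mk.injEq, heq_eq_eq, and_true, true_and]
      omega
    · rintro ⟨⟨p1, p2⟩, ⟨q1, q2⟩⟩ hx
      simp only [Finset.mem_sigma, Finset.HasAntidiagonal.mem_antidiagonal] at hx
      simp only [Sigma.mk.inj_iff, Prod.mk.injEq, heq_eq_eq, and_true, true_and]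
      omega
    · rintro ⟨⟨p1, p2⟩, ⟨q1, q2⟩⟩ hx
      rfl
  rw [hre]
  have inner : ∀ p : ℕ × ℕ,
      (∑ q ∈ antidiagonal p.1,
        (PowerSeries.coeff q.1 D) ((PowerSeries.coeff q.2 Dbar) u))
      = (PowerSeries.coeff p.1 (1 : PowerSeries (Module.End ℚ (ExteriorAlgebra ℚ W)))) u := by
    intro p
    rw [← hinv₁, PowerSeries.coeff_mul]
    simp [Module.End.mul_apply]
  simp only [← Finset.sum_mul, inner, PowerSeries.coeff_one]
  rw [Finset.sum_eq_single (0, n)]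
  · simp [applyPS]
  · rintro ⟨a, b⟩ hmem hne
    rcases Nat.eq_zero_or_pos a with ha | ha
    · exfalso; apply hne; simp_all [Finset.HasAntidiagonal.mem_antidiagonal]
    · simp [Nat.pos_iff_ne_zero.mp ha]
  · intro h; exact absurd (by simp [Finset.HasAntidiagonal.mem_antidiagonal]) h
end
end

section
/- Let D(z) be an invertible Hasse–Schmidt derivation on ⋀V with inverse D̄(z). Then the inverse D̄(z) is itself a Hasse–Schmidt derivation, i.e. D̄(z)(u ∧ v) = D̄(z)u ∧ D̄(z)v for all u, v ∈ ⋀V. -/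
noncomputable section
open Finset

variable {W : Type} [AddCommGroup W] [Module ℚ W]

/- ### auxiliary combinatorial lemmas -/

lemma aux_flatten3 {M : Type*} [AddCommMonoid M] (n : ℕ) (G : ℕ × ℕ → ℕ × ℕ → M) :
    (∑ pq ∈ antidiagonal n, ∑ ab ∈ antidiagonal pq.1, ∑ ij ∈ antidiagonal pq.2, G ab ij)
    = ∑ x ∈ (antidiagonal n).sigma (fun pq => antidiagonal pq.1 ×ˢ antidiagonal pq.2),
        G x.2.1 x.2.2 := by
  rw [Finset.sum_sigma]
  refine Finset.sum_congr rfl fun pq _ => ?_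
  rw [Finset.sum_product]

lemma aux_quad {M : Type*} [AddCommMonoid M] (n : ℕ) (F : ℕ → ℕ → ℕ → ℕ → M) :
    ∑ pq ∈ antidiagonal n, ∑ ab ∈ antidiagonal pq.1, ∑ ij ∈ antidiagonal pq.2,
      F ab.1 ab.2 ij.1 ij.2
  = ∑ st ∈ antidiagonal n, ∑ ai ∈ antidiagonal st.1, ∑ bj ∈ antidiagonal st.2,
      F ai.1 bj.1 ai.2 bj.2 := by
  rw [aux_flatten3 n (fun ab ij => F ab.1 ab.2 ij.1 ij.2),
      aux_flatten3 n (fun ai bj => F ai.1 bj.1 ai.2 bj.2)]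
  refine Finset.sum_nbij' (i := fun x => ⟨(x.2.1.1 + x.2.2.1, x.2.1.2 + x.2.2.2),
      ((x.2.1.1, x.2.2.1), (x.2.1.2, x.2.2.2))⟩)
    (j := fun x => ⟨(x.2.1.1 + x.2.2.1, x.2.1.2 + x.2.2.2),
      ((x.2.1.1, x.2.2.1), (x.2.1.2, x.2.2.2))⟩) ?_ ?_ ?_ ?_ ?_ <;>
    rintro ⟨⟨p,q⟩, ⟨⟨a,b⟩, ⟨i,j⟩⟩⟩ hx <;>
    simp only [Finset.mem_sigma, Finset.mem_product, HasAntidiagonal.mem_antidiagonal,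
      Sigma.mk.inj_iff, Prod.mk.injEq, heq_eq_eq, and_true, true_and] at hx ⊢ <;>
    omega

lemma aux_triple {M : Type*} [AddCommMonoid M] (n : ℕ) (F : ℕ → ℕ → ℕ → M) :
    ∑ pq ∈ antidiagonal n, ∑ ij ∈ antidiagonal pq.2, F pq.1 ij.1 ij.2
  = ∑ st ∈ antidiagonal n, ∑ pi ∈ antidiagonal st.1, F pi.1 pi.2 st.2 := by
  rw [Finset.sum_sigma' (antidiagonal n) (fun pq => antidiagonal pq.2)
        (fun pq ij => F pq.1 ij.1 ij.2),
      Finset.sum_sigma' (antidiagonal n) (fun st => antidiagonal st.1)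
        (fun st pi => F pi.1 pi.2 st.2)]
  refine Finset.sum_nbij'
    (i := fun x => ⟨(x.1.1 + x.2.1, x.2.2), (x.1.1, x.2.1)⟩)
    (j := fun x => ⟨(x.2.1, x.2.2 + x.1.2), (x.2.2, x.1.2)⟩) ?_ ?_ ?_ ?_ ?_ <;>
    rintro ⟨⟨p,q⟩, ⟨i,j⟩⟩ hx <;>
    simp only [Finset.mem_sigma, HasAntidiagonal.mem_antidiagonal,
      Sigma.mk.inj_iff, Prod.mk.injEq, heq_eq_eq, and_true, true_and] at hx ⊢ <;>
    omega

/- ### auxiliary algebraic lemmas -/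

lemma coeff_applyPS (D : PowerSeries (Module.End ℚ (ExteriorAlgebra ℚ W)))
    (u : ExteriorAlgebra ℚ W) (n : ℕ) :
    PowerSeries.coeff n (applyPS D u) = (PowerSeries.coeff n D) u := by
  simp [applyPS]

lemma coeff_actPS (D : PowerSeries (Module.End ℚ (ExteriorAlgebra ℚ W)))
    (f : PowerSeries (ExteriorAlgebra ℚ W)) (n : ℕ) :
    PowerSeries.coeff n (actPS D f)
      = ∑ p ∈ antidiagonal n,
          (PowerSeries.coeff p.1 D) ((PowerSeries.coeff p.2 f)) := by
  simp [actPS]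

/-- `D(z)` acting on `D'(z)u` is `(DD')(z) u`. -/
lemma actPS_applyPS (A B : PowerSeries (Module.End ℚ (ExteriorAlgebra ℚ W)))
    (u : ExteriorAlgebra ℚ W) :
    actPS A (applyPS B u) = applyPS (A * B) u := by
  ext n
  rw [coeff_actPS, coeff_applyPS, PowerSeries.coeff_mul, LinearMap.sum_apply]
  exact Finset.sum_congr rfl fun p _ => by rw [coeff_applyPS]; rfl

/-- `actPS` is an action: composition corresponds to multiplication. -/
lemma actPS_actPS (A B : PowerSeries (Module.End ℚ (ExteriorAlgebra ℚ W)))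
    (f : PowerSeries (ExteriorAlgebra ℚ W)) :
    actPS A (actPS B f) = actPS (A * B) f := by
  ext n
  rw [coeff_actPS, coeff_actPS]
  calc ∑ pq ∈ antidiagonal n, (PowerSeries.coeff pq.1 A)
          (PowerSeries.coeff pq.2 (actPS B f))
      = ∑ pq ∈ antidiagonal n, ∑ ij ∈ antidiagonal pq.2,
          (PowerSeries.coeff pq.1 A)
            ((PowerSeries.coeff ij.1 B) (PowerSeries.coeff ij.2 f)) := by
        refine Finset.sum_congr rfl fun pq _ => ?_
        rw [coeff_actPS, map_sum]
    _ = ∑ st ∈ antidiagonal n, ∑ pi ∈ antidiagonal st.1,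
          (PowerSeries.coeff pi.1 A)
            ((PowerSeries.coeff pi.2 B) (PowerSeries.coeff st.2 f)) :=
        aux_triple n (fun p i j => (PowerSeries.coeff p A)
          ((PowerSeries.coeff i B) (PowerSeries.coeff j f)))
    _ = ∑ st ∈ antidiagonal n,
          (PowerSeries.coeff st.1 (A * B)) (PowerSeries.coeff st.2 f) := by
        refine Finset.sum_congr rfl fun st _ => ?_
        rw [PowerSeries.coeff_mul, LinearMap.sum_apply]
        exact Finset.sum_congr rfl fun pi _ => rfl

lemma actPS_one (f : PowerSeries (ExteriorAlgebra ℚ W)) : actPS 1 f = f := by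
  ext n
  rw [coeff_actPS]
  rw [Finset.sum_eq_single (0, n)]
  · simp [PowerSeries.coeff_one]
  · rintro ⟨p, q⟩ hb hne
    rw [HasAntidiagonal.mem_antidiagonal] at hb
    have hp : p ≠ 0 := by rintro rfl; exact hne (by simp [← hb])
    simp [PowerSeries.coeff_one, hp]
  · intro h
    exact absurd (HasAntidiagonal.mem_antidiagonal.mpr (by simp)) h

lemma applyPS_one (u : ExteriorAlgebra ℚ W) :
    applyPS 1 u = PowerSeries.C u := by
  ext n
  rw [coeff_applyPS, PowerSeries.coeff_one, PowerSeries.coeff_C]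
  split <;> simp

lemma actPS_C (A : PowerSeries (Module.End ℚ (ExteriorAlgebra ℚ W)))
    (u : ExteriorAlgebra ℚ W) :
    actPS A (PowerSeries.C u) = applyPS A u := by
  ext n
  rw [coeff_actPS, coeff_applyPS]
  rw [Finset.sum_eq_single (n, 0)]
  · simp
  · rintro ⟨p, q⟩ hb hne
    rw [HasAntidiagonal.mem_antidiagonal] at hb
    have hq : q ≠ 0 := by rintro rfl; exact hne (by simp [← hb])
    simp [PowerSeries.coeff_C, hq]
  · intro h
    exact absurd (HasAntidiagonal.mem_antidiagonal.mpr (by simp)) h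

/-- if `D(z)` is a Hasse–Schmidt derivation, its linear extension `actPS D` is
multiplicative. -/
lemma actPS_mul (D : PowerSeries (Module.End ℚ (ExteriorAlgebra ℚ W)))
    (hHS : ∀ u v : ExteriorAlgebra ℚ W, applyPS D (u * v) = applyPS D u * applyPS D v)
    (f g : PowerSeries (ExteriorAlgebra ℚ W)) :
    actPS D (f * g) = actPS D f * actPS D g := by
  have hc : ∀ (u v : ExteriorAlgebra ℚ W) (p : ℕ),
      (PowerSeries.coeff p D) (u * v)
        = ∑ ab ∈ antidiagonal p,
            (PowerSeries.coeff ab.1 D) u * (PowerSeries.coeff ab.2 D) v := by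
    intro u v p
    have := congrArg (PowerSeries.coeff p) (hHS u v)
    rw [coeff_applyPS, PowerSeries.coeff_mul] at this
    simpa only [coeff_applyPS] using this
  ext n
  rw [coeff_actPS, PowerSeries.coeff_mul]
  calc ∑ pq ∈ antidiagonal n,
          (PowerSeries.coeff pq.1 D) (PowerSeries.coeff pq.2 (f * g))
      = ∑ pq ∈ antidiagonal n, ∑ ij ∈ antidiagonal pq.2,
          (PowerSeries.coeff pq.1 D)
            (PowerSeries.coeff ij.1 f * PowerSeries.coeff ij.2 g) := by
        refine Finset.sum_congr rfl fun pq _ => ?_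
        rw [PowerSeries.coeff_mul, map_sum]
    _ = ∑ pq ∈ antidiagonal n, ∑ ij ∈ antidiagonal pq.2, ∑ ab ∈ antidiagonal pq.1,
          (PowerSeries.coeff ab.1 D) (PowerSeries.coeff ij.1 f)
            * (PowerSeries.coeff ab.2 D) (PowerSeries.coeff ij.2 g) := by
        refine Finset.sum_congr rfl fun pq _ => Finset.sum_congr rfl fun ij _ => ?_
        exact hc _ _ _
    _ = ∑ pq ∈ antidiagonal n, ∑ ab ∈ antidiagonal pq.1, ∑ ij ∈ antidiagonal pq.2,
          (PowerSeries.coeff ab.1 D) (PowerSeries.coeff ij.1 f)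
            * (PowerSeries.coeff ab.2 D) (PowerSeries.coeff ij.2 g) := by
        exact Finset.sum_congr rfl fun pq _ => Finset.sum_comm
    _ = ∑ st ∈ antidiagonal n, ∑ ai ∈ antidiagonal st.1, ∑ bj ∈ antidiagonal st.2,
          (PowerSeries.coeff ai.1 D) (PowerSeries.coeff ai.2 f)
            * (PowerSeries.coeff bj.1 D) (PowerSeries.coeff bj.2 g) :=
        aux_quad n (fun a b i j =>
          (PowerSeries.coeff a D) (PowerSeries.coeff i f)
            * (PowerSeries.coeff b D) (PowerSeries.coeff j g))
    _ = ∑ st ∈ antidiagonal n,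
          PowerSeries.coeff st.1 (actPS D f) * PowerSeries.coeff st.2 (actPS D g) := by
        refine Finset.sum_congr rfl fun st _ => ?_
        rw [coeff_actPS, coeff_actPS, Finset.sum_mul_sum]

/-- the inverse `D̄(z)` of an invertible Hasse–Schmidt derivation `D(z)`
(with invertible degree-zero coefficient) is again a Hasse–Schmidt derivation. -/
theorem inverse_is_hasseSchmidt
    (D Dbar : PowerSeries (Module.End ℚ (ExteriorAlgebra ℚ W)))
    (hHS : ∀ u v : ExteriorAlgebra ℚ W, applyPS D (u * v) = applyPS D u * applyPS D v)
    (h0 : IsUnit (PowerSeries.constantCoeff D))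
    (hinv₁ : D * Dbar = 1) (hinv₂ : Dbar * D = 1) :
    ∀ u v : ExteriorAlgebra ℚ W,
      applyPS Dbar (u * v) = applyPS Dbar u * applyPS Dbar v := by
  intro u v
  have hC : ∀ w : ExteriorAlgebra ℚ W,
      actPS D (applyPS Dbar w) = PowerSeries.C w := by
    intro w
    rw [actPS_applyPS, hinv₁, applyPS_one]
  calc applyPS Dbar (u * v)
      = actPS Dbar (PowerSeries.C (u * v)) := (actPS_C _ _).symm
    _ = actPS Dbar (PowerSeries.C u * PowerSeries.C v) := by rw [map_mul]
    _ = actPS Dbar (actPS D (applyPS Dbar u) * actPS D (applyPS Dbar v)) := by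
        rw [hC u, hC v]
    _ = actPS Dbar (actPS D (applyPS Dbar u * applyPS Dbar v)) := by
        rw [actPS_mul D hHS]
    _ = actPS (Dbar * D) (applyPS Dbar u * applyPS Dbar v) := actPS_actPS _ _ _
    _ = applyPS Dbar u * applyPS Dbar v := by rw [hinv₂, actPS_one]
end
end

section
/- With V = ⊕_{i≥0} Q·b_i and the Schubert derivations σ_+(z), σ̄_-(w) acting on ⋀V, for any partition λ of length exactly r (i.e. λ_r > 0) one has σ̄_-(w) σ_+(z) [b]^r_λ = σ_+(z) σ̄_-(w) [b]^r_λ, where [b]^r_λ = b_{r-1+λ_1} ∧ ⋯ ∧ b_{λ_r}. -/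
noncomputable section
open Finset

abbrev Vb : Type := ℕ →₀ ℚ
abbrev ExtV : Type := ExteriorAlgebra ℚ Vb

/-- basis vectors `b_i` inside the exterior algebra -/
def bv (i : ℕ) : ExtV := ExteriorAlgebra.ι ℚ (Finsupp.single i (1:ℚ))

/-- the family of coefficients of a Hasse–Schmidt derivation with `D 0` acting as
the identity on scalars -/
def IsHSFamily (D : ℕ → Module.End ℚ ExtV) : Prop :=
  (∀ (i : ℕ) (u v : ExtV), D i (u * v) = ∑ p ∈ Finset.HasAntidiagonal.antidiagonal i, D p.1 u * D p.2 v) ∧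
  (∀ i : ℕ, D i (1 : ExtV) = if i = 0 then 1 else 0)

/-- `σ₊(z)`, via `σ₊(z) b_j = ∑_i b_{j+i} z^i` -/
def IsSigmaPlus (D : ℕ → Module.End ℚ ExtV) : Prop :=
  IsHSFamily D ∧ ∀ i j : ℕ, D i (bv j) = bv (j + i)

/-- `σ₋(w)` (coefficients of `w^{-i}`), via `σ₋(w) b_j = ∑_i b_{j-i} w^{-i}` -/
def IsSigmaMinus (D : ℕ → Module.End ℚ ExtV) : Prop :=
  IsHSFamily D ∧ ∀ i j : ℕ, D i (bv j) = if i ≤ j then bv (j - i) else 0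

/-- `σ̄₊(z)`, via `σ̄₊(z) b_j = b_j - b_{j+1} z` -/
def IsSigmaBarPlus (D : ℕ → Module.End ℚ ExtV) : Prop :=
  IsHSFamily D ∧ ∀ i j : ℕ, D i (bv j) =
    if i = 0 then bv j else if i = 1 then -bv (j+1) else 0

/-- `σ̄₋(w)` (coefficients of `w^{-i}`), via `σ̄₋(w) b_j = b_j - b_{j-1} w^{-1}`, `b_{-1}=0` -/
def IsSigmaBarMinus (D : ℕ → Module.End ℚ ExtV) : Prop :=
  IsHSFamily D ∧ ∀ i j : ℕ, D i (bv j) =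
    if i = 0 then bv j else if i = 1 then (if j = 0 then 0 else -bv (j-1)) else 0

/-- `[b]^r_λ = b_{r-1+λ₁} ∧ ⋯ ∧ b_{λ_r}` -/
def wedgeB (r : ℕ) (lam : Fin r → ℕ) : ExtV :=
  (List.ofFn fun i : Fin r => bv ((r - 1 - (i : ℕ)) + lam i)).prod

/-- the dual basis element `β_j ∈ V*` -/
def betaF (j : ℕ) : Module.Dual ℚ Vb := Finsupp.lapply j

/-- contraction `β_j ⌟ ·` on the exterior algebra -/
def ctr (j : ℕ) : ExtV →ₗ[ℚ] ExtV :=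
  CliffordAlgebra.contractLeft (Q := (0 : QuadraticForm ℚ Vb)) (betaF j)


lemma single_bv_comm (Sp Sbm : ℕ → Module.End ℚ ExtV)
    (hSp : IsSigmaPlus Sp) (hSbm : IsSigmaBarMinus Sbm)
    (a : ℕ) (ha : 1 ≤ a) (i j : ℕ) :
    Sbm i (Sp j (bv a)) = Sp j (Sbm i (bv a)) := by
  rw [hSp.2, hSbm.2, hSbm.2]
  rcases Nat.eq_zero_or_pos i with hi | hi
  · simp [hi, hSp.2]
  rcases eq_or_ne i 1 with hi1 | hi1
  · have h1 : a + j ≠ 0 := by omega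
    have h2 : a ≠ 0 := by omega
    simp only [hi1, if_neg one_ne_zero, if_pos rfl, if_neg h1, if_neg h2, map_neg, hSp.2]
    have h3 : a + j - 1 = a - 1 + j := by omega
    rw [h3]
    simp [hSp.2, map_neg]
  · rw [if_neg (by omega), if_neg hi1, if_neg (by omega), if_neg hi1, map_zero]

lemma list_comm (Sp Sbm : ℕ → Module.End ℚ ExtV)
    (hSp : IsSigmaPlus Sp) (hSbm : IsSigmaBarMinus Sbm) :
    ∀ (l : List ℕ), (∀ a ∈ l, 1 ≤ a) →
      ∀ m n : ℕ, Sbm m (Sp n ((l.map bv).prod)) = Sp n (Sbm m ((l.map bv).prod)) := by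
  intro l
  induction l with
  | nil =>
    intro _ m n
    simp only [List.map_nil, List.prod_nil, hSp.1.2, hSbm.1.2]
    by_cases hn : n = 0 <;> by_cases hm : m = 0 <;>
      simp [hn, hm, hSp.1.2, hSbm.1.2]
  | cons a l ih =>
    intro hmem m n
    have ha : 1 ≤ a := hmem a (List.mem_cons_self)
    have ihl := ih (fun x hx => hmem x (List.mem_cons_of_mem _ hx))
    simp only [List.map_cons, List.prod_cons]
    rw [hSp.1.1, map_sum, hSbm.1.1, map_sum]
    simp only [hSbm.1.1, hSp.1.1]
    rw [Finset.sum_comm]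
    refine Finset.sum_congr rfl fun q _ => ?_
    refine Finset.sum_congr rfl fun p _ => ?_
    rw [single_bv_comm Sp Sbm hSp hSbm a ha q.1 p.1, ihl q.2 p.2]

/-- if `λ` has length exactly `r` (all parts positive) then
`σ̄₋(w) σ₊(z) [b]^r_λ = σ₊(z) σ̄₋(w) [b]^r_λ`, coefficientwise in `z^n w^{-m}`. -/
theorem sbarMinus_sigmaPlus_commute_on_full_length
    (r : ℕ) (lam : Fin r → ℕ) (hlam : Antitone lam) (hpos : ∀ i : Fin r, 0 < lam i)
    (Sp Sbm : ℕ → Module.End ℚ ExtV)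
    (hSp : IsSigmaPlus Sp) (hSbm : IsSigmaBarMinus Sbm) :
    ∀ m n : ℕ, Sbm m (Sp n (wedgeB r lam)) = Sp n (Sbm m (wedgeB r lam)) := by
  intro m n
  have hw : wedgeB r lam = ((List.ofFn fun i : Fin r => (r - 1 - (i : ℕ)) + lam i).map bv).prod := by
    rw [List.map_ofFn]; rfl
  rw [hw]
  exact list_comm Sp Sbm hSp hSbm _ (by
    intro a hamem
    rw [List.mem_ofFn] at hamem
    obtain ⟨i, hi⟩ := hamem
    have h2 := hpos i
    have h3 : (r - 1 - (i : ℕ)) + lam i = a := hi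
    omega) m n
end
end

section
/- Let λ be a partition with at most r parts and λ_r = 0 (length < r). Then σ̄_-(w) σ_+(z) [b]^r_λ = (1 − z/w) σ_+(z) σ̄_-(w) [b]^r_λ in ⋀^r V[[z]][w^{-1}]. -/
noncomputable section
open Finset

def PhiOp (D E : ℕ → Module.End ℚ ExtV) (x : ExtV) : PowerSeries (PowerSeries ExtV) :=
  PowerSeries.mk fun n => PowerSeries.mk fun m => E m (D n x)

def PsiOp (D E : ℕ → Module.End ℚ ExtV) (x : ExtV) : PowerSeries (PowerSeries ExtV) :=
  PowerSeries.mk fun n => PowerSeries.mk fun m => D n (E m x)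

lemma PhiOp_mul (D E : ℕ → Module.End ℚ ExtV) (hD : IsHSFamily D) (hE : IsHSFamily E)
    (x y : ExtV) : PhiOp D E (x * y) = PhiOp D E x * PhiOp D E y := by
  apply PowerSeries.ext; intro n
  apply PowerSeries.ext; intro m
  rw [PowerSeries.coeff_mul, map_sum]
  simp only [PhiOp, PowerSeries.coeff_mk, hD.1, map_sum, hE.1,
    PowerSeries.coeff_mul]

lemma PsiOp_mul (D E : ℕ → Module.End ℚ ExtV) (hD : IsHSFamily D) (hE : IsHSFamily E)
    (x y : ExtV) : PsiOp D E (x * y) = PsiOp D E x * PsiOp D E y := by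
  apply PowerSeries.ext; intro n
  apply PowerSeries.ext; intro m
  rw [PowerSeries.coeff_mul, map_sum]
  simp only [PsiOp, PowerSeries.coeff_mk, hE.1, map_sum, hD.1,
    PowerSeries.coeff_mul]
  rw [Finset.sum_comm]

lemma commute_CX (f : PowerSeries (PowerSeries ExtV)) :
    Commute (PowerSeries.C (R := PowerSeries ExtV) PowerSeries.X) f := by
  show _ * _ = _ * _
  apply PowerSeries.ext; intro n
  rw [PowerSeries.coeff_C_mul, PowerSeries.coeff_mul_C]
  exact (PowerSeries.commute_X _).symm.eq

lemma commute_u (f : PowerSeries (PowerSeries ExtV)) :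
    Commute (1 - PowerSeries.X * PowerSeries.C (R := PowerSeries ExtV) PowerSeries.X) f :=
  Commute.sub_left (Commute.one_left f)
    (Commute.mul_left (PowerSeries.commute_X f).symm (commute_CX f))

section main
variable (Sp Sbm : ℕ → Module.End ℚ ExtV)
  (hSp : IsSigmaPlus Sp) (hSbm : IsSigmaBarMinus Sbm)
include hSp hSbm

lemma phi_eq_psi_bv (j : ℕ) (hj : 1 ≤ j) :
    PhiOp Sp Sbm (bv j) = PsiOp Sp Sbm (bv j) := by
  apply PowerSeries.ext; intro n
  apply PowerSeries.ext; intro m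
  have h1 : j + n ≠ 0 := by omega
  have h2 : j ≠ 0 := by omega
  have h3 : j + n - 1 = j - 1 + n := by omega
  rcases m with _ | _ | m
  · simp [PhiOp, PsiOp, PowerSeries.coeff_mk, hSp.1.2, hSbm.2, hSp.2]
  · simp [PhiOp, PsiOp, PowerSeries.coeff_mk, hSbm.2, h1, h2, map_neg, hSp.2, h3]
  · simp [PhiOp, PsiOp, PowerSeries.coeff_mk, hSbm.2, hSp.2]

lemma phi_bv0 :
    PhiOp Sp Sbm (bv 0) =
      (1 - PowerSeries.X * PowerSeries.C (R := PowerSeries ExtV) PowerSeries.X) *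
        PsiOp Sp Sbm (bv 0) := by
  apply PowerSeries.ext; intro n
  rw [one_sub_mul, map_sub, mul_assoc]
  apply PowerSeries.ext; intro m
  rcases n with _ | k
  · rw [PowerSeries.coeff_zero_X_mul]
    rcases m with _ | _ | m <;>
      simp [PhiOp, PsiOp, PowerSeries.coeff_mk, hSbm.2, hSp.2]
  · rw [PowerSeries.coeff_succ_X_mul, map_sub, PowerSeries.coeff_C_mul]
    rcases m with _ | _ | m
    · simp [PhiOp, PsiOp, PowerSeries.coeff_mk, hSbm.2, hSp.2,
        PowerSeries.coeff_zero_X_mul]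
    · simp [PhiOp, PsiOp, PowerSeries.coeff_mk, hSbm.2, hSp.2,
        PowerSeries.coeff_succ_X_mul]
    · simp [PhiOp, PsiOp, PowerSeries.coeff_mk, hSbm.2, hSp.2,
        PowerSeries.coeff_succ_X_mul]

lemma good_mul (a x : ExtV) (ha : PhiOp Sp Sbm a = PsiOp Sp Sbm a)
    (hx : PhiOp Sp Sbm x =
      (1 - PowerSeries.X * PowerSeries.C (R := PowerSeries ExtV) PowerSeries.X) *
        PsiOp Sp Sbm x) :
    PhiOp Sp Sbm (a * x) =
      (1 - PowerSeries.X * PowerSeries.C (R := PowerSeries ExtV) PowerSeries.X) *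
        PsiOp Sp Sbm (a * x) := by
  rw [PhiOp_mul Sp Sbm hSp.1 hSbm.1, PsiOp_mul Sp Sbm hSp.1 hSbm.1, ha, hx,
    ← mul_assoc, ← (commute_u (PsiOp Sp Sbm a)).eq, mul_assoc]

lemma good_list (L : List ExtV) (hL : ∀ a ∈ L, PhiOp Sp Sbm a = PsiOp Sp Sbm a)
    (x : ExtV)
    (hx : PhiOp Sp Sbm x =
      (1 - PowerSeries.X * PowerSeries.C (R := PowerSeries ExtV) PowerSeries.X) *
        PsiOp Sp Sbm x) :
    PhiOp Sp Sbm (L.prod * x) =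
      (1 - PowerSeries.X * PowerSeries.C (R := PowerSeries ExtV) PowerSeries.X) *
        PsiOp Sp Sbm (L.prod * x) := by
  induction L with
  | nil => simpa using hx
  | cons a L ih =>
      rw [List.prod_cons, mul_assoc]
      exact good_mul Sp Sbm hSp hSbm a _ (hL a List.mem_cons_self)
        (ih fun b hb => hL b (List.mem_cons_of_mem a hb))

end main

/-- if `λ` has at most `r` parts and `λ_r = 0`, then
`σ̄₋(w) σ₊(z) [b]^r_λ = (1 - z/w) σ₊(z) σ̄₋(w) [b]^r_λ` in `⋀^r V[[z]][w^{-1}]`.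
The outer power series variable is `z`, the inner one is `t = w^{-1}`. -/
theorem sbarMinus_sigmaPlus_short_length
    (r : ℕ) (hr : 0 < r) (lam : Fin r → ℕ) (hlam : Antitone lam)
    (hlast : ∀ i : Fin r, (i : ℕ) = r - 1 → lam i = 0)
    (Sp Sbm : ℕ → Module.End ℚ ExtV)
    (hSp : IsSigmaPlus Sp) (hSbm : IsSigmaBarMinus Sbm) :
    (PowerSeries.mk fun n => PowerSeries.mk fun m => Sbm m (Sp n (wedgeB r lam))
      : PowerSeries (PowerSeries ExtV))
    = (1 - PowerSeries.X * PowerSeries.C (R := PowerSeries ExtV) PowerSeries.X) *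
        PowerSeries.mk fun n => PowerSeries.mk fun m => Sp n (Sbm m (wedgeB r lam)) := by
  obtain ⟨s, rfl⟩ : ∃ s, r = s + 1 := ⟨r - 1, by omega⟩
  show PhiOp Sp Sbm (wedgeB (s+1) lam) = _ * PsiOp Sp Sbm (wedgeB (s+1) lam)
  have hw : wedgeB (s+1) lam =
      (List.ofFn fun i : Fin s =>
        bv ((s + 1 - 1 - ((i.castSucc : Fin (s+1)) : ℕ)) + lam i.castSucc)).prod * bv 0 := by
    rw [wedgeB, List.ofFn_succ', List.prod_concat]
    have h0 := hlast (Fin.last s) (by simp)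
    simp [h0]
  rw [hw]
  apply good_list Sp Sbm hSp hSbm
  · intro a ha
    rw [List.mem_ofFn] at ha
    obtain ⟨i, rfl⟩ := ha
    apply phi_eq_psi_bv Sp Sbm hSp hSbm
    have hi := i.isLt
    simp only [Fin.coe_castSucc]
    omega
  · exact phi_bv0 Sp Sbm hSp hSbm
end
end

section
/- Let β(w^{-1}) = ∑_{j≥0} β_j w^{-j} be the generating series of the dual basis, acting on ⋀V by contraction. Then for every u ∈ ⋀^r V, β(w^{-1}) ⌟ σ̄_+(z) u = (1 − z/w) σ̄_+(z)(β(w^{-1}) ⌟ u). -/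
noncomputable section
open Finset

section Aux

/-- shift `b_j ↦ b_{j+1}` on `V` -/
def shiftV : Vb →ₗ[ℚ] Vb := Finsupp.lmapDomain ℚ ℚ Nat.succ

lemma sbp_iota (Sbp : ℕ → Module.End ℚ ExtV) (hSbp : IsSigmaBarPlus Sbp) (n : ℕ) (v : Vb) :
    Sbp n (ExteriorAlgebra.ι ℚ v) =
      if n = 0 then ExteriorAlgebra.ι ℚ v
      else if n = 1 then -ExteriorAlgebra.ι ℚ (shiftV v) else 0 := by
  induction v using Finsupp.induction_linear with
  | zero => split_ifs <;> simp
  | add f g hf hg => split_ifs at * <;> simp [hf, hg] <;> abel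
  | single a b =>
      have h1 : Finsupp.single a b = b • Finsupp.single a (1:ℚ) := by
        simp [Finsupp.smul_single]
      rw [h1, map_smul, map_smul]
      rw [show ExteriorAlgebra.ι ℚ (Finsupp.single a (1:ℚ)) = bv a from rfl, hSbp.2]
      split_ifs <;>
        simp only [shiftV, Finsupp.lmapDomain_apply, Finsupp.mapDomain_single, bv, smul_zero,
          smul_neg, neg_inj, ← map_smul, Finsupp.smul_single, smul_eq_mul, mul_one,
          Nat.succ_eq_add_one]

lemma sbp_iota_mul (Sbp : ℕ → Module.End ℚ ExtV) (hSbp : IsSigmaBarPlus Sbp) (n : ℕ) (v : Vb)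
    (x : ExtV) :
    Sbp n (ExteriorAlgebra.ι ℚ v * x) =
      ExteriorAlgebra.ι ℚ v * Sbp n x -
        (if n = 0 then 0 else ExteriorAlgebra.ι ℚ (shiftV v) * Sbp (n-1) x) := by
  rw [hSbp.1.1, Finset.Nat.sum_antidiagonal_eq_sum_range_succ_mk]
  have h : ∀ i ∈ Finset.range (n+1), Sbp i (ExteriorAlgebra.ι ℚ v) * Sbp (n-i) x =
      (if i = 0 then ExteriorAlgebra.ι ℚ v * Sbp n x else 0) +
        (if i = 1 then -(ExteriorAlgebra.ι ℚ (shiftV v) * Sbp (n-1) x) else 0) := by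
    intro i _
    rw [sbp_iota Sbp hSbp]
    split_ifs with h0 h1 <;> simp_all
  rw [Finset.sum_congr rfl h, Finset.sum_add_distrib, Finset.sum_ite_eq' (Finset.range (n+1)),
    Finset.sum_ite_eq' (Finset.range (n+1))]
  rcases n with _ | n <;> simp [sub_eq_add_neg]

lemma betaF_shift (m : ℕ) (v : Vb) :
    betaF m (shiftV v) = if m = 0 then 0 else betaF (m-1) v := by
  rcases m with _ | m
  · simpa [betaF, shiftV] using Finsupp.mapDomain_notin_range v (0 : ℕ) (by simp)
  · simpa [betaF, shiftV] using Finsupp.mapDomain_apply Nat.succ_injective v m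

lemma ctr_one (m : ℕ) : ctr m (1 : ExtV) = 0 := by
  rw [show (1 : ExtV) = algebraMap ℚ ExtV 1 from (map_one _).symm]
  exact CliffordAlgebra.contractLeft_algebraMap 0 (betaF m) 1

lemma ctr_iota_mul (m : ℕ) (v : Vb) (x : ExtV) :
    ctr m (ExteriorAlgebra.ι ℚ v * x) = betaF m v • x - ExteriorAlgebra.ι ℚ v * ctr m x :=
  CliffordAlgebra.contractLeft_ι_mul (betaF m) v x

lemma key_lemma (Sbp : ℕ → Module.End ℚ ExtV) (hSbp : IsSigmaBarPlus Sbp) (r : ℕ) (u : ExtV)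
    (hu : u ∈ (LinearMap.range (ExteriorAlgebra.ι ℚ : Vb →ₗ[ℚ] ExtV)) ^ r) :
    ∀ n m : ℕ, ctr m (Sbp n u) = Sbp n (ctr m u) -
      (if n = 0 ∨ m = 0 then 0 else Sbp (n-1) (ctr (m-1) u)) := by
  refine Submodule.pow_induction_on_left _ ?_ ?_ ?_ hu
  · intro q n m
    have h1 : algebraMap ℚ ExtV q = q • 1 := Algebra.algebraMap_eq_smul_one q
    simp only [h1, map_smul, hSbp.1.2, smul_ite, smul_zero]
    split_ifs <;> simp [ctr_one]
  · intro x y hx hy n m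
    simp only [map_add, hx, hy]
    split_ifs <;> abel
  · rintro _ ⟨v, rfl⟩ x ih n m
    rcases n with _ | n <;> rcases m with _ | m <;>
      simp only [sbp_iota_mul Sbp hSbp, ctr_iota_mul, betaF_shift, ih, map_sub, map_smul,
        mul_sub, smul_sub, mul_ite, mul_zero, smul_ite, zero_smul, smul_zero, if_true, if_false,
        Nat.succ_ne_zero, Nat.add_sub_cancel, Nat.succ_sub_one, eq_self_iff_true, true_or,
        or_true, or_false, false_or, sub_zero, map_zero, or_self, ite_false, ite_true] <;>
      abel

end Aux

/-- `β(w^{-1}) ⌟ σ̄₊(z) u = (1 - z/w) σ̄₊(z) (β(w^{-1}) ⌟ u)` for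
`u ∈ ⋀^r V`.  The outer power series variable is `z`, the inner one is `t = w^{-1}`,
and the coefficient of `t^m` in `β(w^{-1}) ⌟ ·` is the contraction `β_m ⌟ ·`. -/
theorem beta_series_contraction_sbarPlus
    (Sbp : ℕ → Module.End ℚ ExtV) (hSbp : IsSigmaBarPlus Sbp)
    (r : ℕ) (u : ExtV)
    (hu : u ∈ (LinearMap.range (ExteriorAlgebra.ι ℚ : Vb →ₗ[ℚ] ExtV)) ^ r) :
    (PowerSeries.mk fun n => PowerSeries.mk fun m => ctr m (Sbp n u)
      : PowerSeries (PowerSeries ExtV))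
    = (1 - PowerSeries.X * PowerSeries.C (R := PowerSeries ExtV) PowerSeries.X) *
        PowerSeries.mk fun n => PowerSeries.mk fun m => Sbp n (ctr m u) := by
  
  have key := key_lemma Sbp hSbp r u hu
  apply PowerSeries.ext; intro n
  rw [sub_mul, one_mul, map_sub, mul_assoc]
  rcases n with _ | n
  · rw [PowerSeries.coeff_zero_X_mul, sub_zero, PowerSeries.coeff_mk, PowerSeries.coeff_mk]
    apply PowerSeries.ext; intro m
    rw [PowerSeries.coeff_mk, PowerSeries.coeff_mk]
    simpa using key 0 m
  · rw [PowerSeries.coeff_succ_X_mul, PowerSeries.coeff_C_mul, PowerSeries.coeff_mk,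
      PowerSeries.coeff_mk, PowerSeries.coeff_mk]
    apply PowerSeries.ext; intro m
    rw [map_sub, PowerSeries.coeff_mk, PowerSeries.coeff_mk]
    rcases m with _ | m
    · rw [PowerSeries.coeff_zero_X_mul, sub_zero]
      simpa using key (n+1) 0
    · rw [PowerSeries.coeff_succ_X_mul, PowerSeries.coeff_mk]
      simpa using key (n+1) (m+1)
end
end

section
/- Contraction against β_0 commutes with σ̄_+(z): for every partition λ with at most r parts, β_0 ⌟ σ̄_+(z)[b]^r_λ = σ̄_+(z)(β_0 ⌟ [b]^r_λ). -/
noncomputable section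
open Finset

section Aux

lemma ctr0_bv_mul (k : ℕ) (x : ExtV) :
    ctr 0 (bv k * x) = (if k = 0 then (1:ℚ) else 0) • x - bv k * ctr 0 x := by
  have h := CliffordAlgebra.contractLeft_ι_mul (Q := (0 : QuadraticForm ℚ Vb))
    (d := betaF 0) (Finsupp.single k (1:ℚ)) x
  simpa [ctr, bv, betaF, Finsupp.single_apply] using h

lemma D_zero_mul (D : ℕ → Module.End ℚ ExtV) (hD : IsSigmaBarPlus D) (k : ℕ) (x : ExtV) :
    D 0 (bv k * x) = bv k * D 0 x := by
  rw [hD.1.1]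
  simp [hD.2 0 k]

lemma D_succ_mul (D : ℕ → Module.End ℚ ExtV) (hD : IsSigmaBarPlus D) (k : ℕ) (x : ExtV)
    (m : ℕ) :
    D (m+1) (bv k * x) = bv k * D (m+1) x - bv (k+1) * D m x := by
  rw [hD.1.1, Finset.Nat.sum_antidiagonal_eq_sum_range_succ_mk]
  have hsub : ({0, 1} : Finset ℕ) ⊆ Finset.range (m + 1 + 1) := by
    intro p hp
    simp only [Finset.mem_insert, Finset.mem_singleton] at hp
    rcases hp with h | h <;> simp [h]
  rw [← Finset.sum_subset hsub]
  · rw [Finset.sum_pair (by norm_num)]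
    simp [hD.2 0 k, hD.2 1 k, sub_eq_add_neg]
  · intro p _ hp
    simp only [Finset.mem_insert, Finset.mem_singleton, not_or] at hp
    rw [hD.2 p k, if_neg hp.1, if_neg hp.2, zero_mul]

lemma key (D : ℕ → Module.End ℚ ExtV) (hD : IsSigmaBarPlus D) :
    ∀ l : List ℕ, ∀ n : ℕ,
      ctr 0 (D n ((l.map bv).prod)) = D n (ctr 0 ((l.map bv).prod)) := by
  intro l
  induction l with
  | nil =>
    intro n
    have h1 : ctr 0 (1 : ExtV) = 0 := CliffordAlgebra.contractLeft_one _ _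
    simp only [List.map_nil, List.prod_nil, hD.1.2, h1, map_zero]
    split <;> simp [h1]
  | cons k l ih =>
    intro n
    simp only [List.map_cons, List.prod_cons]
    cases n with
    | zero =>
      rw [D_zero_mul D hD, ctr0_bv_mul, ctr0_bv_mul, map_sub, map_smul,
        D_zero_mul D hD, ih 0]
    | succ m =>
      rw [D_succ_mul D hD, map_sub, ctr0_bv_mul, ctr0_bv_mul, ctr0_bv_mul,
        map_sub, map_smul, D_succ_mul D hD, ih (m+1), ih m]
      simp only [Nat.succ_ne_zero, if_neg (Nat.succ_ne_zero k), zero_smul, zero_sub]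
      ring_nf
      simp
      abel

end Aux

/-- contraction against `β₀` commutes with `σ̄₊(z)`:
`β₀ ⌟ σ̄₊(z) [b]^r_λ = σ̄₊(z) (β₀ ⌟ [b]^r_λ)`, coefficientwise in `z`. -/
theorem beta0_contraction_commutes_sbarPlus
    (r : ℕ) (lam : Fin r → ℕ) (hlam : Antitone lam)
    (Sbp : ℕ → Module.End ℚ ExtV) (hSbp : IsSigmaBarPlus Sbp) :
    ∀ n : ℕ, ctr 0 (Sbp n (wedgeB r lam)) = Sbp n (ctr 0 (wedgeB r lam)) := by
  intro n
  have h : wedgeB r lam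
      = ((List.ofFn fun i : Fin r => (r - 1 - (i : ℕ)) + lam i).map bv).prod := by
    rw [List.map_ofFn]; rfl
  rw [h]
  exact key Sbp hSbp _ n
end
end

section
/- For all k ≥ 1, r ≥ 0 and every partition λ with at most r parts: [b]^k_0 ∧ σ̄_+(z_1,...,z_k)[b]^r_λ = e_k(z_1,...,z_k)^r · σ̄_-(z_1,...,z_k)[b]^{r+k}_λ, where [b]^k_0 = b_{k-1} ∧ ⋯ ∧ b_0. -/
noncomputable section
open Finset

/-- `D(z_1)⋯D(z_k)` applied to `u`: the coefficient of `z_1^{d_1}⋯z_k^{d_k}` is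
`D_{d_1} ∘ ⋯ ∘ D_{d_k}` applied to `u`. -/
def multiAct (k : ℕ) (D : ℕ → Module.End ℚ ExtV) (u : ExtV) :
    MvPowerSeries (Fin k) ExtV :=
  fun d => ((List.ofFn fun i : Fin k => D (d i)).prod) u

open scoped Classical

namespace SA

def P (M : List ℕ) : ExtV := (M.map bv).prod

@[simp] lemma P_nil : P [] = 1 := rfl
lemma P_cons (a : ℕ) (M : List ℕ) : P (a :: M) = bv a * P M := by simp [P]

lemma bv_anticomm (i j : ℕ) : bv i * bv j = -(bv j * bv i) := by
  rw [eq_neg_iff_add_eq_zero]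
  exact ExteriorAlgebra.ι_add_mul_swap _ _

lemma bv_sq (i : ℕ) : bv i * bv i = 0 := ExteriorAlgebra.ι_sq_zero _

lemma bv_mul_P (m : ℕ) (M : List ℕ) :
    bv m * P M = ((-1:ℚ))^M.length • (P M * bv m) := by
  induction M with
  | nil => simp
  | cons a M ih =>
    rw [P_cons, ← mul_assoc, bv_anticomm, neg_mul, mul_assoc, ih, List.length_cons,
      mul_smul_comm, pow_succ, mul_neg_one, neg_smul, mul_assoc]

lemma P_mul_bv (m : ℕ) (M : List ℕ) :
    P M * bv m = ((-1:ℚ))^M.length • (bv m * P M) := by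
  rw [bv_mul_P, smul_smul, ← pow_add]
  rw [Even.neg_one_pow ⟨M.length, rfl⟩, one_smul]

section Ops

variable {D : ℕ → Module.End ℚ ExtV}

def DZ (D : ℕ → Module.End ℚ ExtV) (n : ℤ) : Module.End ℚ ExtV :=
  if 0 ≤ n then D n.toNat else 0

lemma DZ_coe (D : ℕ → Module.End ℚ ExtV) (n : ℕ) : DZ D n = D n := by simp [DZ]

lemma DZ_neg {n : ℤ} (h : n < 0) : DZ D n = 0 := by simp [DZ, not_le.2 h]

lemma DZ_one (hD : IsHSFamily D) (n : ℤ) : DZ D n 1 = if n = 0 then 1 else 0 := by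
  by_cases h : 0 ≤ n
  · rw [DZ, if_pos h, hD.2]
    exact if_congr (by omega) rfl rfl
  · rw [DZ_neg (by omega), if_neg (by omega)]
    simp

lemma sbp_rule (h : IsSigmaBarPlus D) (n : ℤ) (a : ℕ) (u : ExtV) :
    DZ D n (bv a * u) = bv a * DZ D n u - bv (a+1) * DZ D (n-1) u := by
  rcases lt_trichotomy n 0 with hn | hn | hn
  · rw [DZ_neg hn, DZ_neg (by omega)]; simp
  · subst hn
    have e1 : DZ D ((0:ℤ)-1) = 0 := DZ_neg (by norm_num)
    have e0 : DZ D (0:ℤ) = D 0 := by rw [DZ, if_pos le_rfl]; rfl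
    rw [e1, e0, h.1.1 0 (bv a) u]
    rw [Finset.Nat.antidiagonal_zero, Finset.sum_singleton, h.2 0 a]
    simp
  · obtain ⟨m, rfl⟩ : ∃ m : ℕ, n = (m:ℤ)+1 := ⟨(n-1).toNat, by omega⟩
    rw [show ((m:ℤ)+1) = ((m+1:ℕ):ℤ) by push_cast; ring, DZ_coe,
      show ((m+1:ℕ):ℤ)-1 = ((m:ℕ):ℤ) by push_cast; ring, DZ_coe]
    rw [h.1.1 (m+1) (bv a) u, Finset.Nat.sum_antidiagonal_eq_sum_range_succ_mk,
      Finset.sum_range_succ', Finset.sum_range_succ']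
    rw [Finset.sum_eq_zero (fun i _ => by rw [h.2]; simp)]
    rw [h.2 1 a, h.2 0 a]
    simp only [if_neg (by norm_num : (1:ℕ) ≠ 0), if_pos rfl]
    simp only [Nat.add_sub_cancel, Nat.sub_zero, zero_add, neg_mul]
    noncomm_ring
    simp [smul_mul_assoc]
    abel

lemma sbm_rule (h : IsSigmaBarMinus D) (n : ℤ) (a : ℕ) (ha : 1 ≤ a) (u : ExtV) :
    DZ D n (bv a * u) = bv a * DZ D n u - bv (a-1) * DZ D (n-1) u := by
  rcases lt_trichotomy n 0 with hn | hn | hn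
  · rw [DZ_neg hn, DZ_neg (by omega)]; simp
  · subst hn
    have e1 : DZ D ((0:ℤ)-1) = 0 := DZ_neg (by norm_num)
    have e0 : DZ D (0:ℤ) = D 0 := by rw [DZ, if_pos le_rfl]; rfl
    rw [e1, e0, h.1.1 0 (bv a) u]
    rw [Finset.Nat.antidiagonal_zero, Finset.sum_singleton, h.2 0 a]
    simp
  · obtain ⟨m, rfl⟩ : ∃ m : ℕ, n = (m:ℤ)+1 := ⟨(n-1).toNat, by omega⟩
    rw [show ((m:ℤ)+1) = ((m+1:ℕ):ℤ) by push_cast; ring, DZ_coe,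
      show ((m+1:ℕ):ℤ)-1 = ((m:ℕ):ℤ) by push_cast; ring, DZ_coe]
    rw [h.1.1 (m+1) (bv a) u, Finset.Nat.sum_antidiagonal_eq_sum_range_succ_mk,
      Finset.sum_range_succ', Finset.sum_range_succ']
    rw [Finset.sum_eq_zero (fun i _ => by rw [h.2]; simp)]
    rw [h.2 1 a, h.2 0 a]
    simp only [if_neg (by norm_num : (1:ℕ) ≠ 0), if_pos rfl, if_neg (by omega : ¬ a = 0)]
    simp only [Nat.add_sub_cancel, Nat.sub_zero, zero_add, neg_mul]
    noncomm_ring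
    simp [smul_mul_assoc]
    abel

lemma sbm_rule0 (h : IsSigmaBarMinus D) (n : ℤ) (u : ExtV) :
    DZ D n (bv 0 * u) = bv 0 * DZ D n u := by
  rcases lt_trichotomy n 0 with hn | hn | hn
  · rw [DZ_neg hn]; simp
  · subst hn
    rw [show (0:ℤ) = ((0:ℕ):ℤ) from rfl, DZ_coe, h.1.1 0 (bv 0) u]
    rw [Finset.Nat.antidiagonal_zero, Finset.sum_singleton, h.2 0 0]
    simp
  · obtain ⟨m, rfl⟩ : ∃ m : ℕ, n = (m:ℤ)+1 := ⟨(n-1).toNat, by omega⟩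
    rw [show ((m:ℤ)+1) = ((m+1:ℕ):ℤ) by push_cast; ring, DZ_coe]
    rw [h.1.1 (m+1) (bv 0) u, Finset.Nat.sum_antidiagonal_eq_sum_range_succ_mk,
      Finset.sum_range_succ', Finset.sum_range_succ']
    rw [Finset.sum_eq_zero (fun i _ => by rw [h.2]; simp)]
    rw [h.2 1 0, h.2 0 0]
    simp

def CZ (D : ℕ → Module.End ℚ ExtV) (k : ℕ) (e : Fin k → ℤ) : Module.End ℚ ExtV :=
  (List.ofFn fun i => DZ D (e i)).prod

lemma CZ_zero_fn (e : Fin 0 → ℤ) : CZ D 0 e = 1 := by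
  simp [CZ]

lemma CZ_succ (k : ℕ) (e : Fin (k+1) → ℤ) :
    CZ D (k+1) e = DZ D (e 0) * CZ D k (fun i => e i.succ) := by
  rw [CZ, List.ofFn_succ, List.prod_cons]; rfl

def w {k : ℕ} (ε : Fin k → Bool) : ℕ := ∑ i, if ε i then 1 else 0

lemma w_le {k : ℕ} (ε : Fin k → Bool) : w ε ≤ k := by
  calc w ε ≤ ∑ _i : Fin k, 1 := Finset.sum_le_sum (fun i _ => by split <;> omega)
  _ = k := by simp

lemma w_cons (k : ℕ) (b : Bool) (ε : Fin k → Bool) :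
    w (Fin.cons b ε) = (if b then 1 else 0) + w ε := by
  rw [w, Fin.sum_univ_succ, Fin.cons_zero]
  simp only [Fin.cons_succ]
  rfl

lemma w_not {k : ℕ} (ε : Fin k → Bool) : w (fun i => !(ε i)) = k - w ε := by
  have h : w (fun i => !(ε i)) + w ε = k := by
    rw [w, w, ← Finset.sum_add_distrib]
    calc ∑ i : Fin k, ((if !(ε i) then 1 else 0) + if ε i then 1 else 0)
        = ∑ _i : Fin k, 1 := Finset.sum_congr rfl (fun i _ => by cases ε i <;> simp)
      _ = k := by simp
  omega

lemma commute_lemma (D : ℕ → Module.End ℚ ExtV) (f : ℕ → ℕ) (a : ℕ) :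
    ∀ (k : ℕ) (e : Fin k → ℤ) (u : ExtV),
      (∀ (n : ℤ) (v : ExtV) (j : ℕ), j < k →
        DZ D n (bv (f^[j] a) * v) = bv (f^[j] a) * DZ D n v - bv (f^[j+1] a) * DZ D (n-1) v) →
      CZ D k e (bv a * u)
        = ∑ ε : Fin k → Bool, ((-1:ℚ))^(w ε) •
            (bv (f^[w ε] a) * CZ D k (fun i => e i - (if ε i then 1 else 0)) u) := by
  intro k
  induction k with
  | zero =>
    intro e u _
    rw [CZ_zero_fn, Module.End.one_apply, Fintype.sum_unique]
    simp [w, CZ_zero_fn]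
  | succ k ih =>
    intro e u H
    rw [CZ_succ, Module.End.mul_apply,
      ih (fun i => e i.succ) u (fun n v j hj => H n v j (by omega)), map_sum]
    rw [← Equiv.sum_comp (Fin.consEquiv (fun _ : Fin (k+1) => Bool)) _]
    rw [Fintype.sum_prod_type, Fintype.sum_bool, ← Finset.sum_add_distrib]
    refine Finset.sum_congr rfl (fun ε _ => ?_)
    rw [map_smul]
    have hC : ∀ b : Bool, CZ D (k+1) (fun i => e i - (if (Fin.consEquiv (fun _ : Fin (k+1) => Bool)) (b, ε) i then 1 else 0))
        = DZ D (e 0 - (if b then 1 else 0)) * CZ D k (fun i => e i.succ - (if ε i then 1 else 0)) := by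
      intro b
      rw [CZ_succ]
      simp only [Fin.consEquiv, Equiv.coe_fn_mk, Fin.cons_zero, Fin.cons_succ]
    have hw : ∀ b : Bool, w ((Fin.consEquiv (fun _ : Fin (k+1) => Bool)) (b, ε)) = (if b then 1 else 0) + w ε := by
      intro b
      show w (Fin.cons b ε) = _
      exact w_cons k b ε
    rw [hC true, hC false, hw true, hw false]
    simp only [if_true, Bool.false_eq_true, if_false, zero_add, sub_zero, Module.End.mul_apply]
    rw [H (e 0) _ (w ε) (by have := w_le ε; omega)]
    rw [add_comm 1 (w ε), pow_succ, mul_neg_one, neg_smul, smul_sub, sub_eq_add_neg]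
    exact add_comm _ _

lemma iterate_add_one (a j : ℕ) : (· + 1)^[j] a = a + j := by
  induction j with
  | zero => rfl
  | succ j ih => rw [Function.iterate_succ_apply', ih]; omega

lemma iterate_sub_one (a j : ℕ) : (· - 1)^[j] a = a - j := by
  induction j with
  | zero => rfl
  | succ j ih => rw [Function.iterate_succ_apply', ih]; omega

lemma Lp (h : IsSigmaBarPlus D) (k : ℕ) (e : Fin k → ℤ) (a : ℕ) (u : ExtV) :
    CZ D k e (bv a * u)
      = ∑ ε : Fin k → Bool, ((-1:ℚ))^(w ε) •
          (bv (a + w ε) * CZ D k (fun i => e i - (if ε i then 1 else 0)) u) := by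
  rw [commute_lemma D (· + 1) a k e u ?_]
  · exact Finset.sum_congr rfl (fun ε _ => by rw [iterate_add_one])
  · intro n v j _
    rw [iterate_add_one, iterate_add_one]
    exact sbp_rule h n (a + j) v

lemma Lm (h : IsSigmaBarMinus D) (k : ℕ) (e : Fin k → ℤ) (a : ℕ) (ha : k ≤ a) (u : ExtV) :
    CZ D k e (bv a * u)
      = ∑ ε : Fin k → Bool, ((-1:ℚ))^(w ε) •
          (bv (a - w ε) * CZ D k (fun i => e i - (if ε i then 1 else 0)) u) := by
  rw [commute_lemma D (· - 1) a k e u ?_]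
  · exact Finset.sum_congr rfl (fun ε _ => by rw [iterate_sub_one])
  · intro n v j hj
    rw [iterate_sub_one, iterate_sub_one]
    have h1 : a - (j+1) = (a - j) - 1 := by omega
    rw [h1]
    exact sbm_rule h n (a - j) (by omega) v

lemma CZ_one (hD : IsHSFamily D) :
    ∀ (k : ℕ) (e : Fin k → ℤ), CZ D k e 1 = if (∀ i, e i = 0) then 1 else 0 := by
  intro k
  induction k with
  | zero =>
    intro e
    rw [CZ_zero_fn, Module.End.one_apply, if_pos (fun i => i.elim0)]
  | succ k ih =>
    intro e
    rw [CZ_succ, Module.End.mul_apply, ih]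
    by_cases hin : ∀ i : Fin k, e i.succ = 0
    · rw [if_pos hin, DZ_one hD]
      by_cases h0 : e 0 = 0
      · rw [if_pos h0, if_pos]
        intro i
        refine Fin.cases h0 hin i
      · rw [if_neg h0, if_neg (fun hc => h0 (hc 0))]
    · rw [if_neg hin, map_zero, if_neg]
      intro hc
      exact hin (fun i => hc i.succ)

end Ops

def WkL (k : ℕ) : List ℕ := (List.range k).reverse

def Wk (k : ℕ) : ExtV := P (WkL k)

@[simp] lemma WkL_len (k : ℕ) : (WkL k).length = k := by simp [WkL]

lemma WkL_succ (k : ℕ) : WkL (k+1) = k :: WkL k := by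
  simp [WkL, List.range_succ]

lemma Wk_succ (k : ℕ) : Wk (k+1) = bv k * Wk k := by
  rw [Wk, Wk, WkL_succ, P_cons]

lemma Wk_mul_bv (k m : ℕ) : Wk k * bv m = ((-1:ℚ))^k • (bv m * Wk k) := by
  rw [Wk, P_mul_bv, WkL_len]

lemma neg_one_pow_sub {k j : ℕ} (h : j ≤ k) :
    ((-1:ℚ))^(k - j) = ((-1:ℚ))^j * ((-1:ℚ))^k := by
  rw [← pow_add]
  have h2 : ((-1:ℚ))^(k - j) * ((-1:ℚ))^(2*j) = ((-1:ℚ))^(j + k) := by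
    rw [← pow_add]; congr 1; omega
  rw [← h2, pow_mul, neg_one_sq, one_pow, mul_one]

section Ops2

variable {Dp Dm : ℕ → Module.End ℚ ExtV}

lemma ML (hp : IsSigmaBarPlus Dp) (hm : IsSigmaBarMinus Dm) (k : ℕ) :
    ∀ (L : List ℕ) (e : Fin k → ℤ),
      Wk k * CZ Dp k e (P L)
        = CZ Dm k (fun i => (L.length : ℤ) - e i) (P (L.map (· + k))) * Wk k := by
  intro L
  induction L with
  | nil =>
    intro e
    simp only [List.map_nil, List.length_nil, P_nil, Nat.cast_zero, zero_sub]
    rw [CZ_one hp.1, CZ_one hm.1]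
    by_cases hc : ∀ i, e i = 0
    · rw [if_pos hc, if_pos (fun i => by rw [hc i, neg_zero]), mul_one, one_mul]
    · rw [if_neg hc, if_neg (fun h2 => hc (fun i => by have := h2 i; omega)), mul_zero, zero_mul]
  | cons a L ih =>
    intro e
    rw [P_cons, Lp hp, Finset.mul_sum]
    have key : ∀ (m : ℕ) (x : ExtV), Wk k * (((-1:ℚ))^m • x) = ((-1:ℚ))^m • (Wk k * x) :=
      fun m x => mul_smul_comm _ _ _
    simp only [key]
    have key2 : ∀ (m : ℕ) (x : ExtV), Wk k * (bv m * x) = ((-1:ℚ))^k • (bv m * (Wk k * x)) := by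
      intro m x
      rw [← mul_assoc, Wk_mul_bv, smul_mul_assoc, mul_assoc]
    simp only [key2]
    simp only [ih]
    -- RHS
    rw [List.map_cons, P_cons, List.length_cons]
    rw [Lm hm k _ (a + k) (Nat.le_add_left k a) (P (L.map (· + k)))]
    rw [Finset.sum_mul]
    simp only [smul_mul_assoc, mul_assoc]
    refine Fintype.sum_bijective (fun (ε : Fin k → Bool) => fun i => !(ε i))
      (Function.Involutive.bijective (fun ε => by funext i; simp)) _ _ (fun ε => ?_)
    rw [w_not]
    have h1 : a + k - (k - w ε) = a + w ε := by have := w_le ε; omega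
    have h2 : (fun i => ((L.length : ℤ) + 1) - e i - (if !(ε i) then 1 else 0))
        = fun i => (L.length : ℤ) - (e i - (if ε i then 1 else 0)) := by
      funext i
      cases hε : ε i <;> simp <;> ring
    rw [h1, neg_one_pow_sub (w_le ε), smul_smul]
    simp only [Nat.cast_add, Nat.cast_one]
    rw [h2]

def Sp (r : ℕ) : Submodule ℚ ExtV :=
  Submodule.span ℚ {x | ∃ M : List ℕ, M.length = r ∧ P M = x}

lemma P_mem_Sp {M : List ℕ} {r : ℕ} (h : M.length = r) : P M ∈ Sp r :=
  Submodule.subset_span ⟨M, h, rfl⟩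

lemma bv_mul_mem {r : ℕ} (c : ℕ) {x : ExtV} (hx : x ∈ Sp r) : bv c * x ∈ Sp (r+1) := by
  induction hx using Submodule.span_induction with
  | mem y hy =>
    obtain ⟨M, hM, rfl⟩ := hy
    rw [← P_cons]
    exact P_mem_Sp (by simp [hM])
  | zero => rw [mul_zero]; exact Submodule.zero_mem _
  | add y z _ _ hy hz => rw [mul_add]; exact Submodule.add_mem _ hy hz
  | smul a y _ hy => rw [mul_smul_comm]; exact Submodule.smul_mem _ _ hy

lemma sbm_rule_nat (hm : IsSigmaBarMinus Dm) (n a : ℕ) (ha : 1 ≤ a) (u : ExtV) :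
    Dm (n+1) (bv a * u) = bv a * Dm (n+1) u - bv (a-1) * Dm n u := by
  have h := sbm_rule hm ((n+1 : ℕ) : ℤ) a ha u
  rw [DZ_coe] at h
  rw [show ((n+1:ℕ):ℤ)-1 = ((n:ℕ):ℤ) by push_cast; ring, DZ_coe] at h
  exact h

lemma sbm_rule_nat0 (hm : IsSigmaBarMinus Dm) (n : ℕ) (u : ExtV) :
    Dm n (bv 0 * u) = bv 0 * Dm n u := by
  have h := sbm_rule0 hm ((n : ℕ) : ℤ) u
  rwa [DZ_coe] at h

lemma sbm_zero_P (hm : IsSigmaBarMinus Dm) (M : List ℕ) : Dm 0 (P M) = P M := by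
  induction M with
  | nil => rw [P_nil]; rw [hm.1.2 0, if_pos rfl]
  | cons a M ih =>
    rw [P_cons, hm.1.1 0, Finset.Nat.antidiagonal_zero, Finset.sum_singleton, ih,
      hm.2 0 a, if_pos rfl, ← P_cons]

lemma sbm_kill_P (hm : IsSigmaBarMinus Dm) :
    ∀ (M : List ℕ) (n : ℕ), M.length < n → Dm n (P M) = 0 := by
  intro M
  induction M with
  | nil =>
    intro n hn
    rw [P_nil, hm.1.2 n, if_neg (by omega)]
  | cons a M ih =>
    intro n hn
    obtain ⟨n', rfl⟩ : ∃ n', n = n' + 1 := ⟨n - 1, by omega⟩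
    rw [P_cons]
    rcases Nat.eq_zero_or_pos a with rfl | ha
    · rw [sbm_rule_nat0 hm, ih (n'+1) (by simp at hn ⊢; omega), mul_zero]
    · rw [sbm_rule_nat hm n' a ha, ih (n'+1) (by simp at hn ⊢; omega),
        ih n' (by simp at hn ⊢; omega), mul_zero, mul_zero, sub_zero]

lemma sbm_mem_P (hm : IsSigmaBarMinus Dm) :
    ∀ (M : List ℕ) (n : ℕ), Dm n (P M) ∈ Sp M.length := by
  intro M
  induction M with
  | nil =>
    intro n
    rw [P_nil, hm.1.2 n]
    split
    · exact P_mem_Sp (M := []) rfl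
    · exact Submodule.zero_mem _
  | cons a M ih =>
    intro n
    rw [P_cons]
    cases n with
    | zero =>
      rw [← P_cons, sbm_zero_P hm]
      exact P_mem_Sp rfl
    | succ n' =>
      rcases Nat.eq_zero_or_pos a with rfl | ha
      · rw [sbm_rule_nat0 hm, List.length_cons]
        exact bv_mul_mem 0 (ih (n'+1))
      · rw [sbm_rule_nat hm n' a ha, List.length_cons]
        exact Submodule.sub_mem _ (bv_mul_mem a (ih (n'+1))) (bv_mul_mem (a-1) (ih n'))

lemma sbm_mem (hm : IsSigmaBarMinus Dm) {r : ℕ} {x : ExtV} (hx : x ∈ Sp r) (n : ℕ) :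
    Dm n x ∈ Sp r := by
  induction hx using Submodule.span_induction with
  | mem y hy => obtain ⟨M, hM, rfl⟩ := hy; exact hM ▸ sbm_mem_P hm M n
  | zero => rw [map_zero]; exact Submodule.zero_mem _
  | add y z _ _ hy hz => rw [map_add]; exact Submodule.add_mem _ hy hz
  | smul a y _ hy => rw [map_smul]; exact Submodule.smul_mem _ _ hy

lemma sbm_kill (hm : IsSigmaBarMinus Dm) {r : ℕ} {x : ExtV} (hx : x ∈ Sp r) {n : ℕ}
    (hn : r < n) : Dm n x = 0 := by
  induction hx using Submodule.span_induction with
  | mem y hy => obtain ⟨M, hM, rfl⟩ := hy; exact sbm_kill_P hm M n (by omega)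
  | zero => rw [map_zero]
  | add y z _ _ hy hz => rw [map_add, hy, hz, add_zero]
  | smul a y _ hy => rw [map_smul, hy, smul_zero]

lemma sbm_Wk (hm : IsSigmaBarMinus Dm) :
    ∀ (k q : ℕ), 1 ≤ q → Dm q (Wk k) = 0 := by
  intro k
  induction k with
  | zero =>
    intro q hq
    show Dm q (P []) = 0
    rw [P_nil, hm.1.2 q, if_neg (by omega)]
  | succ k ih =>
    intro q hq
    obtain ⟨q', rfl⟩ : ∃ q', q = q' + 1 := ⟨q - 1, by omega⟩
    rw [Wk_succ]
    cases k with
    | zero =>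
      rw [sbm_rule_nat0 hm]
      show bv 0 * Dm (q'+1) (P []) = 0
      rw [P_nil, hm.1.2, if_neg (by omega), mul_zero]
    | succ k' =>
      rw [sbm_rule_nat hm q' (k'+1) (by omega)]
      rw [ih (q'+1) (by omega), mul_zero]
      rcases Nat.eq_zero_or_pos q' with rfl | hq'
      · rw [show Dm 0 (Wk (k'+1)) = Wk (k'+1) from sbm_zero_P hm (WkL (k'+1))]
        rw [Wk_succ, Nat.add_sub_cancel, ← mul_assoc, bv_sq, zero_mul, zero_sub, neg_zero]
      · rw [ih q' hq', mul_zero, sub_zero]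

lemma sbm_mul_Wk (hm : IsSigmaBarMinus Dm) (k n : ℕ) (y : ExtV) :
    Dm n (y * Wk k) = Dm n y * Wk k := by
  rw [hm.1.1 n y (Wk k)]
  rw [Finset.sum_eq_single (n, 0)]
  · rw [show Dm 0 (Wk k) = Wk k from sbm_zero_P hm (WkL k)]
  · intro p hp hne
    have h1 : p.1 + p.2 = n := Finset.HasAntidiagonal.mem_antidiagonal.1 hp
    have h2 : 1 ≤ p.2 := by
      rcases Nat.eq_zero_or_pos p.2 with h0 | h0
      · exfalso; apply hne; have : p.1 = n := by omega
        exact Prod.ext this h0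
      · exact h0
    rw [sbm_Wk hm k p.2 h2, mul_zero]
  · intro hne
    exact absurd (Finset.HasAntidiagonal.mem_antidiagonal.2 (by omega)) hne

lemma sbm_chain (hm : IsSigmaBarMinus Dm) (k r : ℕ) :
    ∀ (es : List ℕ) {x : ExtV}, x ∈ Sp r →
      ∃ x' ∈ Sp r, ((es.map Dm).prod) (x * Wk k) = x' * Wk k := by
  intro es
  induction es with
  | nil => intro x hx; exact ⟨x, hx, by simp⟩
  | cons a es ih =>
    intro x hx
    obtain ⟨x', hx', heq⟩ := ih hx
    refine ⟨Dm a x', sbm_mem hm hx' a, ?_⟩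
    rw [List.map_cons, List.prod_cons, Module.End.mul_apply, heq, sbm_mul_Wk hm]

lemma sbm_big (hm : IsSigmaBarMinus Dm) (k r : ℕ) :
    ∀ (es : List ℕ) {x : ExtV}, x ∈ Sp r → (∃ a ∈ es, r < a) →
      ((es.map Dm).prod) (x * Wk k) = 0 := by
  intro es
  induction es with
  | nil => intro x _ hbad; simp at hbad
  | cons a es ih =>
    intro x hx hbad
    rw [List.map_cons, List.prod_cons, Module.End.mul_apply]
    by_cases hb : ∃ a' ∈ es, r < a'
    · rw [ih hx hb, map_zero]
    · have ha : r < a := by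
        obtain ⟨a', ha', hra⟩ := hbad
        rcases List.mem_cons.1 ha' with rfl | hmem
        · exact hra
        · exact absurd ⟨a', hmem, hra⟩ hb
      obtain ⟨x', hx', heq⟩ := sbm_chain hm k r es hx
      rw [heq, sbm_mul_Wk hm, sbm_kill hm hx' ha, zero_mul]

lemma sbm_DZ_mul_Wk (hm : IsSigmaBarMinus Dm) (k : ℕ) (n : ℤ) (y : ExtV) :
    DZ Dm n (y * Wk k) = DZ Dm n y * Wk k := by
  by_cases h : 0 ≤ n
  · rw [DZ, if_pos h]
    exact sbm_mul_Wk hm k n.toNat y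
  · rw [DZ_neg (by omega)]
    simp

lemma CZ_mul_Wk (hm : IsSigmaBarMinus Dm) (k : ℕ) :
    ∀ (k' : ℕ) (e : Fin k' → ℤ) (y : ExtV),
      CZ Dm k' e (y * Wk k) = CZ Dm k' e y * Wk k := by
  intro k'
  induction k' with
  | zero => intro e y; rw [CZ_zero_fn, Module.End.one_apply, Module.End.one_apply]
  | succ k' ih =>
    intro e y
    rw [CZ_succ, Module.End.mul_apply, Module.End.mul_apply, ih, sbm_DZ_mul_Wk hm]

lemma CZ_eq_zero {D : ℕ → Module.End ℚ ExtV} {k : ℕ} {e : Fin k → ℤ}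
    (h : ∃ i, e i < 0) : CZ D k e = 0 := by
  obtain ⟨i, hi⟩ := h
  apply List.prod_eq_zero
  rw [List.mem_ofFn]
  exact ⟨i, by show DZ D (e i) = 0; rw [DZ_neg hi]⟩

end Ops2

lemma WkL_ofFn (k : ℕ) : WkL k = List.ofFn (fun i : Fin k => k - 1 - (i:ℕ)) := by
  apply List.ext_getElem (by simp [WkL])
  intro i h1 h2
  simp [WkL, List.getElem_reverse, List.getElem_range]

end SA


namespace SA

lemma wedgeB_eq_P (r : ℕ) (lam : Fin r → ℕ) :
    wedgeB r lam = P (List.ofFn fun i : Fin r => (r - 1 - (i : ℕ)) + lam i) := by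
  rw [wedgeB, P, List.map_ofFn]
  rfl

lemma Wk_eq_wedgeB (k : ℕ) : wedgeB k (fun _ => 0) = Wk k := by
  rw [wedgeB_eq_P, Wk, WkL_ofFn]
  have hfun : (fun i : Fin k => (k - 1 - (i : ℕ)) + 0) = fun i : Fin k => k - 1 - (i : ℕ) :=
    funext fun i => by omega
  rw [hfun]

lemma wedgeB_split (r k : ℕ) (lam : Fin r → ℕ) :
    wedgeB (r + k) (fun i => if h : (i : ℕ) < r then lam ⟨i, h⟩ else 0)
      = P ((List.ofFn fun i : Fin r => (r - 1 - (i : ℕ)) + lam i).map (· + k)) * Wk k := by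
  rw [wedgeB, List.ofFn_add, List.prod_append]
  congr 1
  · rw [P, List.map_ofFn, List.map_ofFn]
    refine congrArg (fun f : Fin r → ExtV => (List.ofFn f).prod) (funext fun i => ?_)
    show bv _ = bv _
    have hi : ((Fin.castAdd k i : Fin (r + k)) : ℕ) = (i : ℕ) := rfl
    rw [Fin.coe_castLE, dif_pos i.isLt]
    simp only [Function.comp_apply, Fin.eta]
    exact congrArg bv (by have := i.isLt; omega)
  · rw [Wk, WkL_ofFn, P, List.map_ofFn]
    refine congrArg (fun f : Fin k → ExtV => (List.ofFn f).prod) (funext fun i => ?_)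
    show bv _ = bv _
    have hi : ((Fin.natAdd r i : Fin (r + k)) : ℕ) = r + (i : ℕ) := rfl
    rw [hi, dif_neg (by omega)]
    simp only [Function.comp_apply]
    exact congrArg bv (by have := i.isLt; omega)

end SA


/-- `[b]^k_0 ∧ σ̄₊(z_1,…,z_k)[b]^r_λ = e_k(z)^r ⬝ σ̄₋(z_1,…,z_k)[b]^{r+k}_λ`,
with `e_k(z) = z_1⋯z_k`.  Both sides are Laurent polynomials in `z_1,…,z_k`; the equality
is stated coefficientwise over all `d : Fin k → ℤ`: the left side is a power series in
the `z_i` (zero coefficient at any negative exponent), while multiplying `σ̄₋` (whose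
coefficient at `∏ z_i^{-e_i}` is `σ̄₋_{e_1}∘⋯∘σ̄₋_{e_k}`) by `e_k(z)^r` shifts exponents
by `r` in every variable. -/
theorem wedge_sbarPlus_eq_ek_pow_sbarMinus
    (k r : ℕ) (hk : 1 ≤ k) (lam : Fin r → ℕ) (hlam : Antitone lam)
    (Sbp Sbm : ℕ → Module.End ℚ ExtV)
    (hSbp : IsSigmaBarPlus Sbp) (hSbm : IsSigmaBarMinus Sbm) :
    ∀ d : Fin k → ℤ,
      (if ∀ i, 0 ≤ d i then
          MvPowerSeries.coeff (R := ExtV) (Finsupp.equivFunOnFinite.symm fun i => (d i).toNat)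
            ((MvPowerSeries.C (σ := Fin k) (R := ExtV) (wedgeB k fun _ => 0)) *
              multiAct k Sbp (wedgeB r lam))
        else 0)
      = (if ∀ i, d i ≤ (r : ℤ) then
          ((List.ofFn fun i : Fin k => Sbm ((r - d i).toNat)).prod)
            (wedgeB (r + k) fun i => if h : (i : ℕ) < r then lam ⟨i, h⟩ else 0)
        else 0) := by
  intro d
  have hLlen : (List.ofFn fun i : Fin r => (r - 1 - (i : ℕ)) + lam i).length = r := by simp
  set L : List ℕ := List.ofFn fun i : Fin r => (r - 1 - (i : ℕ)) + lam i with hL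
  have hwB : wedgeB r lam = SA.P L := SA.wedgeB_eq_P r lam
  have hsplit : wedgeB (r + k) (fun i => if h : (i : ℕ) < r then lam ⟨i, h⟩ else 0)
      = SA.P (L.map (· + k)) * SA.Wk k := SA.wedgeB_split r k lam
  have hmem : SA.P (L.map (· + k)) ∈ SA.Sp r := SA.P_mem_Sp (by simp [hLlen])
  by_cases h1 : ∀ i, 0 ≤ d i
  · rw [if_pos h1, MvPowerSeries.coeff_C_mul, MvPowerSeries.coeff_apply]
    have hma : multiAct k Sbp (wedgeB r lam)
          (Finsupp.equivFunOnFinite.symm fun i => (d i).toNat)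
        = (List.ofFn fun i : Fin k => Sbp ((d i).toNat)).prod (wedgeB r lam) := by
      rw [multiAct]
      simp
    rw [hma, SA.Wk_eq_wedgeB, hwB]
    have hcz : (List.ofFn fun i : Fin k => Sbp ((d i).toNat)).prod = SA.CZ Sbp k d := by
      have hfun : (fun i : Fin k => SA.DZ Sbp (d i)) = fun i : Fin k => Sbp ((d i).toNat) :=
        funext fun i => by rw [SA.DZ, if_pos (h1 i)]
      rw [SA.CZ, hfun]
    rw [hcz, SA.ML hSbp hSbm k L d]
    simp only [hLlen]
    by_cases h2 : ∀ i, d i ≤ (r : ℤ)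
    · rw [if_pos h2, hsplit]
      have hcz2 : (List.ofFn fun i : Fin k => Sbm (((r : ℤ) - d i).toNat)).prod
          = SA.CZ Sbm k (fun i => (r : ℤ) - d i) := by
        have hfun : (fun i : Fin k => SA.DZ Sbm ((r : ℤ) - d i))
            = fun i : Fin k => Sbm (((r : ℤ) - d i).toNat) :=
          funext fun i => by rw [SA.DZ, if_pos (by have := h2 i; omega)]
        rw [SA.CZ, hfun]
      rw [hcz2, SA.CZ_mul_Wk hSbm]
    · rw [if_neg h2]
      push_neg at h2
      obtain ⟨i0, hi0⟩ := h2
      rw [SA.CZ_eq_zero ⟨i0, by omega⟩, LinearMap.zero_apply, zero_mul]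
  · rw [if_neg h1]
    by_cases h2 : ∀ i, d i ≤ (r : ℤ)
    · rw [if_pos h2, hsplit]
      push_neg at h1
      obtain ⟨i0, hi0⟩ := h1
      have hofn : (List.ofFn fun i : Fin k => Sbm (((r : ℤ) - d i).toNat))
          = (List.ofFn fun i : Fin k => ((r : ℤ) - d i).toNat).map Sbm := by
        rw [List.map_ofFn]
        rfl
      rw [hofn, SA.sbm_big hSbm k r _ hmem
        ⟨((r : ℤ) - d i0).toNat, List.mem_ofFn.2 ⟨i0, rfl⟩, by omega⟩]
    · rw [if_neg h2]
end
end
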